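/- (Composition formula) If ψ(x) = e^{⊙x} M_ψ and φ(x) = e^{⊙x} M_φ are formal power series maps F^n → F^n with zero constant terms, then the matrix of the composition ψ∘φ is M_{ψ∘φ} = e^{⊙ M_φ} M_ψ, where e^{⊙A} = Σ_{i=0}^∞ A^{⊙i}/i! and the product on the right is the ordinary (block) matrix product. -/

import Mathlib

/-! Multi-index matrices and their symmetric product (Bekbaev). -/

/-- Multi-indices: `n`-tuples of nonnegative integers. -/
abbrev MultiIndex (n : ℕ) := Fin n →₀ ℕ

namespace SymProd

variable {n : ℕ} {R : Type*} [CommRing R]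

/-- `|α| = α₁ + ⋯ + αₙ`. -/
def deg (α : MultiIndex n) : ℕ := α.sum fun _ v => v

/-- `α! = α₁! ⋯ αₙ!`. -/
def mfact (α : MultiIndex n) : ℕ := α.prod fun _ v => v.factorial

/-- The multinomial coefficient `C(α,β) = α!/(β!(α−β)!) = ∏ᵢ C(αᵢ,βᵢ)`. -/
def mchoose (α β : MultiIndex n) : ℕ := ∏ i ∈ α.support ∪ β.support, (α i).choose (β i)

/-- A "matrix" indexed by pairs of multi-indices (row index first). A matrix in
`M(p',p;R)` is such a function supported on rows of degree `p'` and columns of degree `p`. -/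
abbrev Mat (n : ℕ) (R : Type*) := MultiIndex n → MultiIndex n → R

/-- `A` belongs to `M(p',p;R)`: supported on rows `α'` with `|α'| = p'` and columns `α`
with `|α| = p`. -/
def IsHom (p' p : ℕ) (A : Mat n R) : Prop :=
  ∀ α' α, A α' α ≠ 0 → deg α' = p' ∧ deg α = p

/-- The symmetric product
`(A ⊙ B)^{α'}_α = ∑_{β' ≪ α', β ≪ α} C(α,β) A^{β'}_β B^{α'−β'}_{α−β}`.
For `A ∈ M(p',p;R)` and `B ∈ M(q',q;R)` this agrees with Bekbaev's Definition 1
(the degree restrictions on `β, β'` hold automatically on the support of `A`). -/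
noncomputable def odot (A B : Mat n R) : Mat n R := fun α' α =>
  ∑ β' ∈ Finset.Iic α', ∑ β ∈ Finset.Iic α,
    (mchoose α β : R) * A β' β * B (α' - β') (α - β)

/-- The identity element `1 ∈ Mat(R)`: the `(0,0)` block is `1`. -/
def matOne : Mat n R := fun α' α => if α' = 0 ∧ α = 0 then 1 else 0

/-- `A^{⊙m}`, the `m`-th symmetric power. -/
noncomputable def sympow (A : Mat n R) : ℕ → Mat n R
  | 0 => matOne
  | m + 1 => odot (sympow A m) A

/-- The row vector `h = (h₁,…,hₙ) ∈ M(0,1;R)` attached to `h : Fin n → R`. -/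
noncomputable def rowVec (h : Fin n → R) : Mat n R := fun α' α =>
  if α' = 0 then ∑ j : Fin n, (if α = Finsupp.single j 1 then h j else 0) else 0

/-- Multi-indices of degree `w` (a finite set). -/
noncomputable def degSet (n w : ℕ) : Finset (MultiIndex n) :=
  (Finset.Iic (Finsupp.equivFunOnFinite.symm fun _ : Fin n => w)).filter fun β => deg β = w

/-- Ordinary matrix product of `v ∈ M(0,w;R)` with `A ∈ M(p',w;R)`, contracting the
weight-`w` index (the columns of `A`, via transposition): the result, in `M(0,p';R)`,
has entries `(v·A)^{α'}_α = ∑_{|β| = w} v^{α'}_β A^{α}_β`. -/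
noncomputable def vecMul (w : ℕ) (v A : Mat n R) : Mat n R := fun α' α =>
  ∑ β ∈ degSet n w, v α' β * A α β

end SymProd

namespace SymProd

variable {n : ℕ} {F : Type*} [Field F]

/-- The constant multi-index `(d,…,d)`. -/
noncomputable def constM (n d : ℕ) : MultiIndex n := Finsupp.equivFunOnFinite.symm fun _ => d

/-- Composition: substitution of the `n`-tuple `φ` (each with zero constant term) into the
multivariate power series `f`, i.e. `f(φ(x))`; the coefficient of `x^α` only receives
contributions from monomials `x^β` of `f` with `|β| ≤ |α|`. -/
noncomputable def mvComp (φ : Fin n → MvPowerSeries (Fin n) F)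
    (f : MvPowerSeries (Fin n) F) : MvPowerSeries (Fin n) F := fun α =>
  ∑ β ∈ Finset.Iic (constM n (deg α)),
    MvPowerSeries.coeff β f * MvPowerSeries.coeff α (∏ j : Fin n, φ j ^ β j)

/-- `m`-fold compositional iterate `φ^{∘m}` of a power series map, `φ^{∘0} = id`. -/
noncomputable def mvIter (φ : Fin n → MvPowerSeries (Fin n) F) :
    ℕ → Fin n → MvPowerSeries (Fin n) F
  | 0 => fun j => MvPowerSeries.X j
  | m + 1 => fun j => mvComp φ (mvIter φ m j)

/-- The matrix `M_φ ∈ Mat(F)` of a power series map `φ : Fⁿ → Fⁿ`: supported on the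
column blocks `p = 1`, with `(M_φ)^{α'}_{e_j} = ` the coefficient of `x^{α'}` in `φ_j`
(from the expansion `φ(x) = ∑_i (x^{⊙i}/i!) M^i_1`). -/
noncomputable def matOf (φ : Fin n → MvPowerSeries (Fin n) F) : Mat n F := fun α' α =>
  ∑ j : Fin n, if α = Finsupp.single j 1 then MvPowerSeries.coeff α' (φ j) else 0

/-- Ordinary (block) matrix product on `Mat(F)`; the contraction is truncated to
column-degrees `≤ deg α'`, which is the full product whenever the left factor `A`
satisfies `A α' β = 0` for `deg β > deg α'` (as is the case for `e^{⊙M_φ}` with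
`φ(0) = 0`). -/
noncomputable def matMul (A B : Mat n F) : Mat n F := fun α' α =>
  ∑ β ∈ Finset.Iic (constM n (deg α')), A α' β * B β α

/-- `E_1`: identity in the `(1,1)` block, zero elsewhere. -/
def E1 : Mat n F := fun α' α => if α' = α ∧ deg α = 1 then 1 else 0

/-- `E_∞`: the (infinite) identity matrix of `Mat(F)`. -/
def Einf : Mat n F := fun α' α => if α' = α then 1 else 0

/-- Powers with respect to ordinary matrix multiplication. -/
noncomputable def matPow (A : Mat n F) : ℕ → Mat n F
  | 0 => Einf
  | m + 1 => matMul A (matPow A m)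

/-- `e^{⊙A} = ∑_i A^{⊙i}/i!`; the sum is truncated blockwise at `i = deg α'`, which is
the full sum whenever `A^{⊙i}` has vanishing `(deg α', ·)` blocks for `i > deg α'`
(as is the case for `A = M_φ` with `M_φ(0,1) = 0`). -/
noncomputable def expOdot (A : Mat n F) : Mat n F := fun α' α =>
  ∑ i ∈ Finset.range (deg α' + 1), (i.factorial : F)⁻¹ * sympow A i α' α

end SymProd

namespace SymProd
open MvPowerSeries Finset
variable {n : ℕ} {F : Type*} [Field F]

private lemma deg_eq_sum (α : MultiIndex n) : deg α = ∑ i, α i :=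
  Finsupp.sum_fintype _ _ (fun _ => rfl)

private lemma deg_add (α β : MultiIndex n) : deg (α + β) = deg α + deg β := by
  simp [deg_eq_sum, Finset.sum_add_distrib]

private lemma deg_zero_iff {α : MultiIndex n} : deg α = 0 ↔ α = 0 := by
  simp only [deg_eq_sum, Finset.sum_eq_zero_iff, Finset.mem_univ, true_implies]
  constructor
  · intro h; ext i; exact h i
  · intro h i; simp [h]

private lemma deg_single_one (j : Fin n) : deg (Finsupp.single j 1) = 1 := by
  simp [deg_eq_sum, Finsupp.single_apply]

private lemma deg_sub_add {α β : MultiIndex n} (h : β ≤ α) :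
    deg (α - β) + deg β = deg α := by
  rw [← deg_add, tsub_add_cancel_of_le h]

private lemma coeff_mul_Iic (f g : MvPowerSeries (Fin n) F) (α : MultiIndex n) :
    coeff α (f * g) = ∑ β ∈ Finset.Iic α, coeff β f * coeff (α - β) g := by
  rw [MvPowerSeries.coeff_mul]
  refine Finset.sum_nbij' (fun p => p.1) (fun β => (β, α - β)) ?_ ?_ ?_ ?_ ?_
  · intro p hp
    rw [Finset.HasAntidiagonal.mem_antidiagonal] at hp
    rw [Finset.mem_Iic, ← hp]; exact le_self_add
  · intro β hβ
    rw [Finset.mem_Iic] at hβ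
    rw [Finset.HasAntidiagonal.mem_antidiagonal]; exact add_tsub_cancel_of_le hβ
  · intro p hp
    rw [Finset.HasAntidiagonal.mem_antidiagonal] at hp
    ext
    · rfl
    · simp only; rw [← hp, add_tsub_cancel_left]
  · intro β hβ; rfl
  · intro p hp
    rw [Finset.HasAntidiagonal.mem_antidiagonal] at hp
    rw [← hp, add_tsub_cancel_left]

private lemma prod_pow_add_single (φ : Fin n → MvPowerSeries (Fin n) F)
    (γ : MultiIndex n) (k : Fin n) :
    (∏ j, φ j ^ ((γ + Finsupp.single k 1 : MultiIndex n) j)) = φ k * ∏ j, φ j ^ γ j := by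
  have : ∀ j, (γ + Finsupp.single k 1 : MultiIndex n) j = γ j + (if k = j then 1 else 0) := by
    intro j; simp [Finsupp.single_apply]
  simp only [this, pow_add, Finset.prod_mul_distrib, pow_ite, pow_one, pow_zero,
    Finset.prod_ite_eq, Finset.mem_univ, if_pos]
  ring

private lemma prod_pow_sub_single (φ : Fin n → MvPowerSeries (Fin n) F)
    {α : MultiIndex n} {k : Fin n} (h : Finsupp.single k 1 ≤ α) :
    (∏ j, φ j ^ α j) = φ k * ∏ j, φ j ^ ((α - Finsupp.single k 1 : MultiIndex n) j) := by
  rw [← prod_pow_add_single, tsub_add_cancel_of_le h]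

/-- Lemma B: low-order coefficients of `∏ φ^β` vanish. -/
private lemma coeff_prod_pow_eq_zero (φ : Fin n → MvPowerSeries (Fin n) F)
    (hφ : ∀ j, constantCoeff (φ j) = 0) :
    ∀ m (β α : MultiIndex n), deg β = m → deg α < m →
      coeff α (∏ j, φ j ^ β j) = 0 := by
  intro m
  induction m with
  | zero => intro β α h h'; omega
  | succ m ih =>
    intro β α hβ hα
    have hβ0 : β ≠ 0 := by
      rintro rfl
      rw [deg_zero_iff.mpr rfl] at hβ; omega
    obtain ⟨k, hk⟩ : ∃ k, β k ≠ 0 := by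
      by_contra h; push_neg at h; exact hβ0 (Finsupp.ext fun i => h i)
    have hk' : Finsupp.single k 1 ≤ β := Finsupp.single_le_iff.mpr (by omega)
    rw [prod_pow_sub_single φ hk', coeff_mul_Iic]
    apply Finset.sum_eq_zero
    intro γ hγ
    rw [Finset.mem_Iic] at hγ
    by_cases hγ0 : γ = 0
    · subst hγ0
      rw [MvPowerSeries.coeff_zero_eq_constantCoeff_apply, hφ k, zero_mul]
    · have hdγ : 1 ≤ deg γ := by
        rcases Nat.eq_zero_or_pos (deg γ) with h | h
        · exact absurd (deg_zero_iff.mp h) hγ0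
        · exact h
      have h1 : deg (β - Finsupp.single k 1) = m := by
        have := deg_sub_add hk'
        rw [deg_single_one] at this; omega
      have h2 : deg (α - γ) < m := by
        have := deg_sub_add hγ
        omega
      rw [ih _ _ h1 h2, mul_zero]

/-- `mchoose α (α - e_k) = α k` when `e_k ≤ α`. -/
private lemma mchoose_sub_single {α : MultiIndex n} {k : Fin n}
    (h : Finsupp.single k 1 ≤ α) :
    mchoose α (α - Finsupp.single k 1) = α k := by
  have hk : 1 ≤ α k := Finsupp.single_le_iff.mp h
  unfold mchoose
  have hmem : k ∈ α.support ∪ (α - Finsupp.single k 1).support := by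
    simp [Finsupp.mem_support_iff]; omega
  rw [Finset.prod_eq_single k]
  · have : (α - Finsupp.single k 1 : MultiIndex n) k = α k - 1 := by
      simp [Finsupp.tsub_apply, Finsupp.single_apply]
    rw [this, Nat.choose_symm (by omega), Nat.choose_one_right]
  · intro i _ hik
    have : (α - Finsupp.single k 1 : MultiIndex n) i = α i := by
      simp [Finsupp.tsub_apply, Finsupp.single_apply, Ne.symm hik]
    rw [this, Nat.choose_self]
  · intro h'; exact absurd hmem h'

end SymProd
namespace SymProd
open MvPowerSeries Finset
variable {n : ℕ} {F : Type*} [Field F]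

/-- Lemma A: `sympow (matOf φ) m` computes `m! ·` coefficients of `∏ φ^α`. -/
private lemma sympow_matOf (φ : Fin n → MvPowerSeries (Fin n) F) :
    ∀ m (α' α : MultiIndex n), sympow (matOf φ) m α' α =
      if deg α = m then (m.factorial : F) * coeff α' (∏ j, φ j ^ α j) else 0 := by
  intro m
  induction m with
  | zero =>
    intro α' α
    show matOne α' α = _
    by_cases hα : α = 0
    · subst hα
      rw [if_pos (deg_zero_iff.mpr rfl)]
      simp [matOne, MvPowerSeries.coeff_one]
    · rw [if_neg fun h => hα (deg_zero_iff.mp h)]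
      simp [matOne, hα]
  | succ m ih =>
    intro α' α
    show odot (sympow (matOf φ) m) (matOf φ) α' α = _
    unfold odot
    by_cases hα : deg α = m + 1
    case neg =>
      rw [if_neg hα]
      apply Finset.sum_eq_zero; intro β' _
      apply Finset.sum_eq_zero; intro β hβ
      rw [Finset.mem_Iic] at hβ
      rw [ih]
      by_cases hdβ : deg β = m
      · rw [if_pos hdβ]
        have hz : matOf φ (α' - β') (α - β) = 0 := by
          unfold matOf
          apply Finset.sum_eq_zero; intro j _
          rw [if_neg]
          intro h
          apply hα
          have h2 := deg_sub_add hβ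
          rw [h, deg_single_one] at h2
          omega
        rw [hz, mul_zero]
      · rw [if_neg hdβ]; ring
    case pos =>
      rw [if_pos hα]
      have key : ∀ j : Fin n,
          (∑ β' ∈ Finset.Iic α', ∑ β ∈ Finset.Iic α,
            (mchoose α β : F) * sympow (matOf φ) m β' β *
              (if α - β = Finsupp.single j 1 then coeff (α' - β') (φ j) else 0))
          = (α j : F) * ((m.factorial : F) * coeff α' (∏ i, φ i ^ α i)) := by
        intro j
        by_cases hj : Finsupp.single j 1 ≤ α
        case neg =>
          have hj0 : α j = 0 := by
            have := mt Finsupp.single_le_iff.mpr hj; omega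
          rw [hj0, Nat.cast_zero, zero_mul]
          apply Finset.sum_eq_zero; intro β' _
          apply Finset.sum_eq_zero; intro β hβ
          rw [Finset.mem_Iic] at hβ
          rw [if_neg, mul_zero]
          intro h
          exact hj (h ▸ tsub_le_self)
        case pos =>
          have hdeg : deg (α - Finsupp.single j 1) = m := by
            have := deg_sub_add hj
            rw [deg_single_one] at this; omega
          have hcol : ∀ β' : MultiIndex n,
              (∑ β ∈ Finset.Iic α,
                (mchoose α β : F) * sympow (matOf φ) m β' β *
                  (if α - β = Finsupp.single j 1 then coeff (α' - β') (φ j) else 0))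
              = (α j : F) * ((m.factorial : F) *
                  coeff β' (∏ i, φ i ^ ((α - Finsupp.single j 1 : MultiIndex n) i))) *
                    coeff (α' - β') (φ j) := by
            intro β'
            rw [Finset.sum_eq_single (α - Finsupp.single j 1)]
            · rw [if_pos (tsub_tsub_cancel_of_le hj), mchoose_sub_single hj, ih,
                if_pos hdeg]
            · intro β hβ hne
              rw [Finset.mem_Iic] at hβ
              rw [if_neg, mul_zero]
              intro h
              exact hne (by rw [← tsub_tsub_cancel_of_le hβ, h])
            · intro h
              exact absurd (Finset.mem_Iic.mpr tsub_le_self) h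
          rw [Finset.sum_congr rfl fun β' _ => hcol β']
          rw [prod_pow_sub_single φ hj, mul_comm (φ j), coeff_mul_Iic,
            Finset.mul_sum, Finset.mul_sum]
          exact Finset.sum_congr rfl fun β' _ => by ring
      have step1 : ∀ β' β : MultiIndex n,
          (mchoose α β : F) * sympow (matOf φ) m β' β * matOf φ (α' - β') (α - β)
          = ∑ j : Fin n, (mchoose α β : F) * sympow (matOf φ) m β' β *
              (if α - β = Finsupp.single j 1 then coeff (α' - β') (φ j) else 0) := by
        intro β' β
        simp only [matOf, Finset.mul_sum]
      rw [Finset.sum_congr rfl fun β' _ => Finset.sum_congr rfl fun β _ => step1 β' β]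
      rw [Finset.sum_congr rfl fun β' (_ : β' ∈ Finset.Iic α') => Finset.sum_comm]
      rw [Finset.sum_comm]
      rw [Finset.sum_congr rfl fun j (_ : j ∈ Finset.univ) => key j]
      rw [← Finset.sum_mul]
      have hsum : (∑ j, (α j : F)) = ((m : F) + 1) := by
        rw [← Nat.cast_sum, ← deg_eq_sum, hα]; push_cast; ring
      rw [hsum, Nat.factorial_succ]
      push_cast; ring

/-- Lemma C: `expOdot (matOf φ)` computes the coefficients of `∏ φ^β`. -/
private lemma expOdot_matOf [CharZero F] (φ : Fin n → MvPowerSeries (Fin n) F)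
    (hφ : ∀ j, constantCoeff (φ j) = 0) (α' β : MultiIndex n) :
    expOdot (matOf φ) α' β = coeff α' (∏ j, φ j ^ β j) := by
  unfold expOdot
  have h1 : ∀ i ∈ Finset.range (deg α' + 1),
      (i.factorial : F)⁻¹ * sympow (matOf φ) i α' β
      = if deg β = i then coeff α' (∏ j, φ j ^ β j) else 0 := by
    intro i _
    rw [sympow_matOf]
    split
    · rw [← mul_assoc, inv_mul_cancel₀ (by exact_mod_cast Nat.factorial_ne_zero i), one_mul]
    · rw [mul_zero]
  rw [Finset.sum_congr rfl h1, Finset.sum_ite_eq]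
  split
  · rfl
  · next h =>
    rw [Finset.mem_range, Nat.lt_succ_iff, not_le] at h
    exact (coeff_prod_pow_eq_zero φ hφ (deg β) β α' rfl h).symm

end SymProd
open SymProd MvPowerSeries in
/-- composition formula: for power series maps `φ, ψ : Fⁿ → Fⁿ` with zero
constant terms, the matrix of the composition `ψ∘φ` is `M_{ψ∘φ} = e^{⊙M_φ} M_ψ`. -/
theorem matOf_comp {n : ℕ} (F : Type*) [Field F] [CharZero F]
    (φ ψ : Fin n → MvPowerSeries (Fin n) F)
    (hφ : ∀ j, constantCoeff (φ j) = 0)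
    (hψ : ∀ j, constantCoeff (ψ j) = 0) :
    matOf (fun j => mvComp φ (ψ j)) = matMul (expOdot (matOf φ)) (matOf ψ) := by
  funext α' α
  have hL : ∀ j, coeff α' (mvComp φ (ψ j)) =
      ∑ β ∈ Finset.Iic (constM n (deg α')),
        coeff β (ψ j) * coeff α' (∏ i, φ i ^ β i) := fun j => rfl
  simp only [matOf, matMul, hL]
  simp only [Finset.mul_sum, mul_ite, mul_zero]
  conv_rhs => rw [Finset.sum_comm]
  refine Finset.sum_congr rfl fun j _ => ?_
  by_cases h : α = Finsupp.single j 1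
  · simp only [if_pos h]
    exact Finset.sum_congr rfl fun β _ => by rw [expOdot_matOf φ hφ]; ring
  · simp only [if_neg h, Finset.sum_const_zero]
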